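/- For each γ ∈ (0, √2) and each τ ∈ (0, D_γ), there exist p ∈ (1,2) and q ∈ (4/(1−τ), ∞) such that (p−1)(1 − γ²p/2) − τp/2 − p/q > 0. -/

import Mathlib

noncomputable def Dgamma (γ : ℝ) : ℝ :=
  if γ < Real.sqrt 2 / 2 then 1 - γ ^ 2 else (Real.sqrt 2 - γ) ^ 2

lemma exists_q (τ p g : ℝ) (hp0 : 0 < p) (hτ1 : τ < 1) (hg : 0 < g) :
    ∃ q : ℝ, 4 / (1 - τ) < q ∧ p / q < g := by
  refine ⟨max (4 / (1 - τ) + 1) (2 * p / g), ?_, ?_⟩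
  · exact lt_of_lt_of_le (by linarith) (le_max_left _ _)
  · have hq : 2 * p / g ≤ max (4 / (1 - τ) + 1) (2 * p / g) := le_max_right _ _
    have hq0 : 0 < 2 * p / g := by positivity
    have h1 : p / max (4 / (1 - τ) + 1) (2 * p / g) ≤ p / (2 * p / g) :=
      div_le_div_of_nonneg_left hp0.le hq0 hq
    have h2 : p / (2 * p / g) = g / 2 := by
      field_simp
    rw [h2] at h1
    linarith

theorem exists_suitable_exponents (γ τ : ℝ)
    (hγ : γ ∈ Set.Ioo 0 (Real.sqrt 2)) (hτ : τ ∈ Set.Ioo 0 (Dgamma γ)) :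
    ∃ p q : ℝ, p ∈ Set.Ioo (1 : ℝ) 2 ∧ 4 / (1 - τ) < q ∧
      (p - 1) * (1 - γ ^ 2 * p / 2) - τ * p / 2 - p / q > 0 := by
  obtain ⟨hγ0, hγ2⟩ := hγ
  obtain ⟨hτ0, hτD⟩ := hτ
  have h2 : (Real.sqrt 2) ^ 2 = 2 := Real.sq_sqrt (by norm_num)
  have hs2 : 0 < Real.sqrt 2 := Real.sqrt_pos.mpr (by norm_num)
  by_cases hc : Real.sqrt 2 / 2 < γ
  · -- p = √2 / γ
    have hDval : Dgamma γ = (Real.sqrt 2 - γ) ^ 2 := by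
      unfold Dgamma; rw [if_neg (by linarith)]
    rw [hDval] at hτD
    have hτ1 : τ < 1 := by nlinarith
    set p := Real.sqrt 2 / γ with hp
    have hp1 : 1 < p := (one_lt_div hγ0).mpr hγ2
    have hp2 : p < 2 := by
      rw [hp, div_lt_iff₀ hγ0]; linarith
    have hg : 0 < (p - 1) * (1 - γ ^ 2 * p / 2) - τ * p / 2 := by
      have key : (p - 1) * (1 - γ ^ 2 * p / 2) - τ * p / 2
          = ((Real.sqrt 2 - γ) ^ 2 - τ) / (Real.sqrt 2 * γ) := by
        rw [hp]
        field_simp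
        linear_combination (γ ^ 2 - τ - Real.sqrt 2 * γ) * h2
      rw [key]
      exact div_pos (by linarith) (by positivity)
    obtain ⟨q, hq1, hq2⟩ := exists_q τ p _ (by linarith) hτ1 hg
    exact ⟨p, q, ⟨hp1, hp2⟩, hq1, by linarith⟩
  · -- γ ≤ √2/2, τ < 1 - γ²
    push_neg at hc
    have hτD' : τ < 1 - γ ^ 2 := by
      by_cases hlt : γ < Real.sqrt 2 / 2
      · have : Dgamma γ = 1 - γ ^ 2 := by unfold Dgamma; rw [if_pos hlt]
        linarith [this ▸ hτD]
      · have heq : γ = Real.sqrt 2 / 2 := le_antisymm hc (not_lt.mp hlt)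
        have : Dgamma γ = (Real.sqrt 2 - γ) ^ 2 := by
          unfold Dgamma; rw [if_neg hlt]
        rw [this, heq] at hτD
        rw [heq]
        nlinarith
    have hτ1 : τ < 1 := by nlinarith
    set s := 1 - γ ^ 2 - τ with hs
    have hs0 : 0 < s := by linarith
    set ε := min (s / 2) (1 / 2) with hε
    have hε0 : 0 < ε := lt_min (by linarith) (by norm_num)
    have hε1 : ε ≤ 1 / 2 := min_le_right _ _
    have hεs : ε ≤ s / 2 := min_le_left _ _
    set p := 2 - ε with hp
    have hp1 : 1 < p := by rw [hp]; linarith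
    have hp2 : p < 2 := by rw [hp]; linarith
    have hg : 0 < (p - 1) * (1 - γ ^ 2 * p / 2) - τ * p / 2 := by
      rw [hp]
      nlinarith [sq_nonneg γ, mul_pos hε0 hε0]
    obtain ⟨q, hq1, hq2⟩ := exists_q τ p _ (by linarith) hτ1 hg
    exact ⟨p, q, ⟨hp1, hp2⟩, hq1, by linarith⟩
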